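/- arXiv:0711.3827 — 3 statements merged into one kernel-verified Lean document; each statement's English description precedes it below -/
import Mathlib

section
/- Fix 0 < ε < 1. If 1 ≤ k = k(n) ≤ n^{1-ε} and r = r(n) ≥ k(n), then the expected number of heterochromatic k-matchings E[Y] = (n!/((n-2k)! · 2^k · k!)) · (r!/((r-k)! · r^k)) tends to infinity as n → ∞. -/
open Finset Filter

open scoped Classical

noncomputable section

/-- A finset of edges of `K_n` forms a matching: all edges are proper (non-loop)
and no two distinct edges share a vertex. -/
def IsMatching {n : ℕ} (M : Finset (Sym2 (Fin n))) : Prop :=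
  (∀ e ∈ M, ¬ e.IsDiag) ∧
    ∀ e ∈ M, ∀ f ∈ M, e ≠ f → ∀ v : Fin n, v ∈ e → v ∉ f

/-- The finset of all `k`-matchings of `K_n`. -/
def matchings (n k : ℕ) : Finset (Finset (Sym2 (Fin n))) :=
  Finset.univ.filter fun M => M.card = k ∧ IsMatching M

/-- All edges in `M` receive the same color under the coloring `c`. -/
def Monochromatic {n r : ℕ} (c : Sym2 (Fin n) → Fin r)
    (M : Finset (Sym2 (Fin n))) : Prop :=
  ∃ col, ∀ e ∈ M, c e = col

/-- Distinct edges in `M` receive pairwise distinct colors under `c`. -/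
def Heterochromatic {n r : ℕ} (c : Sym2 (Fin n) → Fin r)
    (M : Finset (Sym2 (Fin n))) : Prop :=
  ∀ e ∈ M, ∀ f ∈ M, e ≠ f → c e ≠ c f

/-- Probability of an event `P` under a uniformly random `r`-coloring of the
edges of `K_n`. -/
def Pr (n r : ℕ) (P : (Sym2 (Fin n) → Fin r) → Prop) : ℚ :=
  ((Finset.univ.filter P).card : ℚ) / (Fintype.card (Sym2 (Fin n) → Fin r) : ℚ)

/-- Expected number of monochromatic `k`-matchings in a uniformly random
`r`-coloring of the edges of `K_n`. -/
def EXmono (n r k : ℕ) : ℚ :=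
  (∑ c : Sym2 (Fin n) → Fin r,
      (((matchings n k).filter fun M => Monochromatic c M).card : ℚ)) /
    (Fintype.card (Sym2 (Fin n) → Fin r) : ℚ)

/-- Expected number of heterochromatic `k`-matchings in a uniformly random
`r`-coloring of the edges of `K_n`. -/
def EYhet (n r k : ℕ) : ℚ :=
  (∑ c : Sym2 (Fin n) → Fin r,
      (((matchings n k).filter fun M => Heterochromatic c M).card : ℚ)) /
    (Fintype.card (Sym2 (Fin n) → Fin r) : ℚ)

/-- The vertex set `S` spans a monochromatic clique: all edges between distinct
vertices of `S` have one common color. -/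
def MonoClique {n r : ℕ} (c : Sym2 (Fin n) → Fin r) (S : Finset (Fin n)) : Prop :=
  ∃ col, ∀ u ∈ S, ∀ v ∈ S, u ≠ v → c s(u, v) = col

/-- The vertex set `S` spans a heterochromatic clique: distinct edges between
vertices of `S` have pairwise distinct colors. -/
def HeteroClique {n r : ℕ} (c : Sym2 (Fin n) → Fin r) (S : Finset (Fin n)) : Prop :=
  ∀ u ∈ S, ∀ v ∈ S, ∀ w ∈ S, ∀ x ∈ S,
    u ≠ v → w ≠ x → s(u, v) ≠ s(w, x) → c s(u, v) ≠ c s(w, x)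

/-- `T` is the edge set of a tree with vertex set `S`: it consists of
`S.card - 1` proper edges inside `S` and connects all vertices of `S`
(a connected graph on `|S|` vertices with `|S| - 1` edges is a tree). -/
def IsTreeOn {n : ℕ} (S : Finset (Fin n)) (T : Finset (Sym2 (Fin n))) : Prop :=
  T.card + 1 = S.card ∧ (∀ e ∈ T, ¬ e.IsDiag) ∧
    (∀ e ∈ T, ∀ v : Fin n, v ∈ e → v ∈ S) ∧
    ∀ u ∈ S, ∀ v ∈ S,
      (SimpleGraph.fromEdgeSet (↑T : Set (Sym2 (Fin n)))).Reachable u v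

-- count colorings injective on a finset M
lemma count_injOn (n r k : ℕ) (M : Finset (Sym2 (Fin n))) (hM : M.card = k) :
    (Finset.univ.filter (fun c : Sym2 (Fin n) → Fin r => Set.InjOn c ↑M)).card
      = r.descFactorial k * r ^ (Fintype.card (Sym2 (Fin n)) - k) := by
  classical
  rw [← Fintype.card_subtype]
  have e1 : {c : Sym2 (Fin n) → Fin r // Set.InjOn c ↑M} ≃
      {x : ({e // e ∈ M} → Fin r) × ({e // e ∉ M} → Fin r) //
        Function.Injective x.1} := by
    refine (Equiv.piEquivPiSubtypeProd (· ∈ M) (fun _ => Fin r)).subtypeEquiv ?_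
    intro c
    simp only [Equiv.piEquivPiSubtypeProd_apply]
    rw [Set.injOn_iff_injective]
    exact Iff.rfl
  have e2 : {x : ({e // e ∈ M} → Fin r) × ({e // e ∉ M} → Fin r) //
        Function.Injective x.1} ≃
      ({f : {e // e ∈ M} → Fin r // Function.Injective f}) × ({e // e ∉ M} → Fin r) :=
    Equiv.prodSubtypeFstEquivSubtypeProd
  rw [Fintype.card_congr (e1.trans e2), Fintype.card_prod,
    Fintype.card_congr (Equiv.subtypeInjectiveEquivEmbedding _ _),
    Fintype.card_embedding_eq, Fintype.card_fun]
  have h1 : Fintype.card {e // e ∈ M} = k := by simp [Fintype.card_coe, hM]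
  have h2 : Fintype.card {e // e ∉ M} = Fintype.card (Sym2 (Fin n)) - k := by
    have := Fintype.card_subtype_compl (fun e : Sym2 (Fin n) => e ∈ M)
    simpa [h1] using this
  rw [h1, h2, Fintype.card_fin]

lemma het_iff_injOn {n r : ℕ} (c : Sym2 (Fin n) → Fin r) (M : Finset (Sym2 (Fin n))) :
    Heterochromatic c M ↔ Set.InjOn c ↑M := by
  constructor
  · intro h e he f hf hef
    by_contra hne
    exact h e (by simpa using he) f (by simpa using hf) hne hef
  · intro h e he f hf hne hc
    exact hne (h (by simpa using he) (by simpa using hf) hc)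

lemma Pr_het (n r k : ℕ) (hr : 0 < r) (M : Finset (Sym2 (Fin n))) (hM : M.card = k) :
    Pr n r (fun c => Heterochromatic c M) = (r.descFactorial k : ℚ) / r ^ k := by
  unfold Pr
  have hfc : (Finset.univ.filter (fun c : Sym2 (Fin n) → Fin r => Heterochromatic c M))
      = Finset.univ.filter (fun c => Set.InjOn c ↑M) :=
    Finset.filter_congr (fun c _ => het_iff_injOn c M)
  rw [hfc, count_injOn n r k M hM, Fintype.card_fun, Fintype.card_fin]
  have hk : k ≤ Fintype.card (Sym2 (Fin n)) := by
    rw [← hM]; simpa using Finset.card_le_univ M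
  have : r ^ Fintype.card (Sym2 (Fin n)) = r ^ k * r ^ (Fintype.card (Sym2 (Fin n)) - k) := by
    rw [← pow_add, Nat.add_sub_cancel' hk]
  rw [this]
  push_cast
  rw [mul_div_mul_right]
  positivity

lemma EYhet_eq_sum (n r k : ℕ) :
    EYhet n r k = ∑ M ∈ matchings n k, Pr n r (fun c => Heterochromatic c M) := by
  unfold EYhet Pr
  rw [← Finset.sum_div]
  congr 1
  have : ∀ c : Sym2 (Fin n) → Fin r,
      (((matchings n k).filter fun M => Heterochromatic c M).card : ℚ)
        = ∑ M ∈ matchings n k, if Heterochromatic c M then (1:ℚ) else 0 := by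
    intro c
    rw [Finset.sum_boole]
  simp only [this]
  rw [Finset.sum_comm]
  congr 1
  ext M
  rw [Finset.sum_boole]

namespace MatchCount

variable {n k : ℕ}

def aIdx (k : ℕ) (i : Fin k) : Fin (2*k) := ⟨2*i.val, by have := i.isLt; omega⟩
def bIdx (k : ℕ) (i : Fin k) : Fin (2*k) := ⟨2*i.val+1, by have := i.isLt; omega⟩

def matchOf (f : Fin (2*k) ↪ Fin n) : Finset (Sym2 (Fin n)) :=
  Finset.univ.image (fun i : Fin k => s(f (aIdx k i), f (bIdx k i)))

lemma edge_inj (f : Fin (2*k) ↪ Fin n) {i j : Fin k}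
    (h : s(f (aIdx k i), f (bIdx k i)) = s(f (aIdx k j), f (bIdx k j))) : i = j := by
  rw [Sym2.eq_iff] at h
  rcases h with ⟨h1, _⟩ | ⟨h1, h2⟩
  · have := f.injective h1
    simp only [aIdx, Fin.mk.injEq] at this
    exact Fin.ext (by omega)
  · have := f.injective h1
    simp only [aIdx, bIdx, Fin.mk.injEq] at this
    omega

lemma matchOf_mem (f : Fin (2*k) ↪ Fin n) : matchOf f ∈ matchings n k := by
  rw [matchings, Finset.mem_filter]
  refine ⟨Finset.mem_univ _, ?_, ?_, ?_⟩
  · rw [matchOf, Finset.card_image_of_injective _ (fun i j h => edge_inj f h)]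
    simp
  · intro e he
    rw [matchOf, Finset.mem_image] at he
    obtain ⟨i, _, rfl⟩ := he
    rw [Sym2.mk_isDiag_iff]
    intro hc
    have := f.injective hc
    simp [aIdx, bIdx] at this
  · intro e he e' he' hne v hv hv'
    rw [matchOf, Finset.mem_image] at he he'
    obtain ⟨i, _, rfl⟩ := he
    obtain ⟨j, _, rfl⟩ := he'
    have hij : i ≠ j := fun hc => hne (by rw [hc])
    rw [Sym2.mem_iff] at hv hv'
    have hijval : i.val ≠ j.val := fun hc => hij (Fin.ext hc)
    rcases hv with h1 | h1 <;> rcases hv' with h2 | h2 <;>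
    · have := f.injective (h1.symm.trans h2)
      simp only [aIdx, bIdx, Fin.mk.injEq] at this
      omega

lemma fiber_card_le (M : Finset (Sym2 (Fin n))) (hMcard : M.card = k) :
    ((Finset.univ : Finset (Fin (2*k) ↪ Fin n)).filter
        (fun f => matchOf f = M)).card ≤ 2^k * k.factorial := by
  classical
  set t : Finset ((Fin k → Sym2 (Fin n)) × (Fin k → Bool)) :=
    Finset.univ.filter (fun p => Function.Injective p.1 ∧ ∀ i, p.1 i ∈ M) with ht
  have step1 : ((Finset.univ : Finset (Fin (2*k) ↪ Fin n)).filter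
      (fun f => matchOf f = M)).card ≤ t.card := by
    apply Finset.card_le_card_of_injOn
      (fun f => (fun i => s(f (aIdx k i), f (bIdx k i)),
                 fun i => decide (f (aIdx k i) < f (bIdx k i))))
    · intro f hf
      rw [Finset.mem_coe, Finset.mem_filter] at hf
      rw [Finset.mem_coe, ht, Finset.mem_filter]
      refine ⟨Finset.mem_univ _, fun i j h => edge_inj f h, fun i => ?_⟩
      rw [← hf.2, matchOf, Finset.mem_image]
      exact ⟨i, Finset.mem_univ _, rfl⟩
    · intro f₁ h₁ f₂ h₂ heq
      have hfst := congrArg Prod.fst heq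
      have hsnd := congrArg Prod.snd heq
      simp only at hfst hsnd
      have hcomp : ∀ i : Fin k, f₁ (aIdx k i) = f₂ (aIdx k i) ∧
          f₁ (bIdx k i) = f₂ (bIdx k i) := by
        intro i
        have he : s(f₁ (aIdx k i), f₁ (bIdx k i)) = s(f₂ (aIdx k i), f₂ (bIdx k i)) :=
          congrFun hfst i
        have hd : decide (f₁ (aIdx k i) < f₁ (bIdx k i))
            = decide (f₂ (aIdx k i) < f₂ (bIdx k i)) := congrFun hsnd i
        have hab : f₁ (aIdx k i) ≠ f₁ (bIdx k i) := by
          intro hc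
          have := f₁.injective hc
          simp [aIdx, bIdx] at this
        rw [Sym2.eq_iff] at he
        rcases he with h | ⟨hx, hy⟩
        · exact h
        · exfalso
          rw [← hx, ← hy] at hd
          rcases lt_or_gt_of_ne hab with hlt | hgt
          · rw [decide_eq_true hlt, eq_comm, decide_eq_true_iff] at hd
            exact absurd hd (not_lt_of_gt hlt)
          · rw [decide_eq_true hgt, decide_eq_true_iff] at hd
            exact absurd hd (not_lt_of_gt hgt)
      apply DFunLike.ext
      intro j
      rcases Nat.even_or_odd j.val with ⟨i, hi⟩ | ⟨i, hi⟩
      · have hik : i < k := by have := j.isLt; omega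
        have : j = aIdx k ⟨i, hik⟩ := Fin.ext (by simp [aIdx]; omega)
        rw [this]; exact (hcomp ⟨i, hik⟩).1
      · have hik : i < k := by have := j.isLt; omega
        have : j = bIdx k ⟨i, hik⟩ := Fin.ext (by simp [bIdx]; omega)
        rw [this]; exact (hcomp ⟨i, hik⟩).2
  have step2 : t.card ≤ Fintype.card ((Fin k ↪ {e // e ∈ M}) × (Fin k → Bool)) := by
    set h : (Fin k ↪ {e // e ∈ M}) × (Fin k → Bool) →
        (Fin k → Sym2 (Fin n)) × (Fin k → Bool) :=
      fun q => (fun i => (q.1 i).val, q.2) with hh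
    have hsub : t ⊆ Finset.image h Finset.univ := by
      intro p hp
      rw [ht, Finset.mem_filter] at hp
      obtain ⟨-, hinj, hmem⟩ := hp
      rw [Finset.mem_image]
      refine ⟨(⟨fun i => ⟨p.1 i, hmem i⟩, fun i j hij => hinj (by
        simpa using congrArg Subtype.val hij)⟩, p.2), Finset.mem_univ _, ?_⟩
      rfl
    calc t.card ≤ (Finset.image h Finset.univ).card := Finset.card_le_card hsub
      _ ≤ _ := by rw [← Finset.card_univ]; exact Finset.card_image_le
  calc _ ≤ t.card := step1
    _ ≤ _ := step2
    _ = 2^k * k.factorial := by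
        rw [Fintype.card_prod, Fintype.card_embedding_eq, Fintype.card_fun]
        simp [Fintype.card_coe, hMcard, Nat.descFactorial_self, mul_comm]

lemma matchings_card_lb (n k : ℕ) :
    n.descFactorial (2*k) ≤ 2^k * k.factorial * (matchings n k).card := by
  classical
  have hcard : (Finset.univ : Finset (Fin (2*k) ↪ Fin n)).card = n.descFactorial (2*k) := by
    rw [Finset.card_univ, Fintype.card_embedding_eq, Fintype.card_fin, Fintype.card_fin]
  have hmain := Finset.card_le_mul_card_image (f := matchOf)
    (Finset.univ : Finset (Fin (2*k) ↪ Fin n)) (2^k * k.factorial) ?_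
  · have himg : Finset.image matchOf (Finset.univ : Finset (Fin (2*k) ↪ Fin n))
        ⊆ matchings n k := by
      intro M hM
      rw [Finset.mem_image] at hM
      obtain ⟨f, -, rfl⟩ := hM
      exact matchOf_mem f
    calc n.descFactorial (2*k) = _ := hcard.symm
      _ ≤ _ := hmain
      _ ≤ 2^k * k.factorial * (matchings n k).card := by
          exact Nat.mul_le_mul_left _ (Finset.card_le_card himg)
  · intro M hM
    rw [Finset.mem_image] at hM
    obtain ⟨f₀, -, hf₀⟩ := hM
    have hMcard : M.card = k := by
      have := matchOf_mem f₀
      rw [matchings, Finset.mem_filter] at this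
      rw [← hf₀]; exact this.2.1
    exact fiber_card_le M hMcard

end MatchCount

-- Lemma 4: ratio monotonicity
lemma ratio_lb (k r : ℕ) (hkr : k ≤ r) (hk : 1 ≤ k) :
    (k.factorial : ℚ) / (k : ℚ)^k ≤ (r.descFactorial k : ℚ) / (r : ℚ)^k := by
  have hk0 : (0:ℚ) < (k:ℚ) := by exact_mod_cast hk
  have hr0 : (0:ℚ) < (r:ℚ) := by exact_mod_cast lt_of_lt_of_le hk hkr
  rw [div_le_div_iff₀ (by positivity) (by positivity)]
  have hfac : (k.factorial : ℚ) = ∏ i ∈ Finset.range k, ((k:ℚ) - i) := by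
    rw [← Nat.descFactorial_self]
    rw [Nat.descFactorial_eq_prod_range]
    push_cast [Nat.cast_prod]
    apply Finset.prod_congr rfl
    intro i hi
    rw [Finset.mem_range] at hi
    rw [Nat.cast_sub (le_of_lt hi)]
  have hdesc : (r.descFactorial k : ℚ) = ∏ i ∈ Finset.range k, ((r:ℚ) - i) := by
    rw [Nat.descFactorial_eq_prod_range]
    push_cast [Nat.cast_prod]
    apply Finset.prod_congr rfl
    intro i hi
    rw [Finset.mem_range] at hi
    rw [Nat.cast_sub (le_of_lt (lt_of_lt_of_le hi hkr))]
  rw [hfac, hdesc]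
  have hrk : (r:ℚ)^k = ∏ _i ∈ Finset.range k, (r:ℚ) := by
    rw [Finset.prod_const, Finset.card_range]
  have hkk : (k:ℚ)^k = ∏ _i ∈ Finset.range k, (k:ℚ) := by
    rw [Finset.prod_const, Finset.card_range]
  rw [hrk, hkk, ← Finset.prod_mul_distrib, ← Finset.prod_mul_distrib]
  apply Finset.prod_le_prod
  · intro i hi
    rw [Finset.mem_range] at hi
    have : (i:ℚ) ≤ (k:ℚ) := by exact_mod_cast le_of_lt hi
    nlinarith
  · intro i hi
    rw [Finset.mem_range] at hi
    have h1 : (i:ℚ) < (k:ℚ) := by exact_mod_cast hi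
    have h2 : (k:ℚ) ≤ (r:ℚ) := by exact_mod_cast hkr
    have h3 : (0:ℚ) ≤ (i:ℚ) := by positivity
    nlinarith

lemma EYhet_lb (n r k : ℕ) (hk : 1 ≤ k) (hkr : k ≤ r) :
    ((n + 1 - 2*k : ℕ) : ℚ)^(2*k) / ((2:ℚ)^k * (k:ℚ)^k) ≤ EYhet n r k := by
  have hr : 0 < r := lt_of_lt_of_le hk hkr
  have hk0 : (0:ℚ) < (k:ℚ) := by exact_mod_cast hk
  have hEY : EYhet n r k = ((matchings n k).card : ℚ) * ((r.descFactorial k : ℚ) / (r:ℚ)^k) := by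
    rw [EYhet_eq_sum]
    rw [Finset.sum_congr rfl (fun M hM => ?_), Finset.sum_const, nsmul_eq_mul]
    have hMk : M.card = k := by
      rw [matchings, Finset.mem_filter] at hM
      exact hM.2.1
    exact Pr_het n r k hr M hMk
  set N : ℚ := ((matchings n k).card : ℚ) with hNdef
  have hN0 : 0 ≤ N := by positivity
  set q : ℚ := (r.descFactorial k : ℚ) / (r:ℚ)^k with hqdef
  have hq : (k.factorial : ℚ) / (k:ℚ)^k ≤ q := ratio_lb k r hkr hk
  have hNlb : (n.descFactorial (2*k) : ℚ) ≤ 2^k * k.factorial * N := by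
    have h2 := MatchCount.matchings_card_lb n k
    have h3 : ((n.descFactorial (2*k) : ℕ) : ℚ) ≤ ((2^k * k.factorial * (matchings n k).card : ℕ) : ℚ) := by
      exact_mod_cast h2
    push_cast at h3
    convert h3 using 2
  have hpow : (((n + 1 - 2*k)^(2*k) : ℕ) : ℚ) ≤ (n.descFactorial (2*k) : ℚ) := by
    exact_mod_cast Nat.pow_sub_le_descFactorial n (2*k)
  rw [hEY]
  have hden : (0:ℚ) < (2:ℚ)^k * (k:ℚ)^k := by positivity
  rw [div_le_iff₀ hden]
  have hfac0 : (0:ℚ) < (k.factorial : ℚ) := by exact_mod_cast k.factorial_pos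
  calc ((n + 1 - 2*k : ℕ) : ℚ)^(2*k) = (((n + 1 - 2*k)^(2*k) : ℕ) : ℚ) := by push_cast; ring
    _ ≤ (n.descFactorial (2*k) : ℚ) := hpow
    _ ≤ 2^k * k.factorial * N := hNlb
    _ = N * ((k.factorial : ℚ) / (k:ℚ)^k) * ((2:ℚ)^k * (k:ℚ)^k) := by
        field_simp
    _ ≤ N * q * ((2:ℚ)^k * (k:ℚ)^k) := by
        apply mul_le_mul_of_nonneg_right _ (le_of_lt hden)
        exact mul_le_mul_of_nonneg_left hq hN0


/-- if `1 ≤ k(n) ≤ n^(1-ε)` and `r(n) ≥ k(n)`, then the expected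
number of heterochromatic `k(n)`-matchings tends to infinity. -/
theorem expectation_hetero_matchings_tendsto_atTop (ε : ℝ) (hε0 : 0 < ε)
    (hε1 : ε < 1) (k r : ℕ → ℕ)
    (h : ∀ᶠ n in atTop,
      1 ≤ k n ∧ (k n : ℝ) ≤ (n : ℝ) ^ ((1 : ℝ) - ε) ∧ k n ≤ r n) :
    Tendsto (fun n => ((EYhet n (r n) (k n) : ℚ) : ℝ)) atTop atTop := by
  have hteps : Tendsto (fun n : ℕ => (n:ℝ) ^ ε) atTop atTop :=
    (tendsto_rpow_atTop hε0).comp tendsto_natCast_atTop_atTop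
  have htend : Tendsto (fun n : ℕ => (n:ℝ) ^ ((1:ℝ) + ε) / 8) atTop atTop :=
    (((tendsto_rpow_atTop (by linarith)).comp tendsto_natCast_atTop_atTop)).atTop_div_const
      (by norm_num)
  apply tendsto_atTop_mono' atTop _ htend
  filter_upwards [h, hteps.eventually_ge_atTop 8, htend.eventually_ge_atTop 1,
    eventually_ge_atTop 1] with n hn h8 h1 hn1
  obtain ⟨hK1, hKle, hKR⟩ := hn
  set K := k n with hKdef
  set R := r n with hRdef
  have hnR : (1:ℝ) ≤ (n:ℝ) := by exact_mod_cast hn1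
  have hnpos : (0:ℝ) < (n:ℝ) := by linarith
  -- 8 * n^(1-ε) ≤ n
  have hsplit : (n:ℝ) ^ ((1:ℝ) - ε) * (n:ℝ) ^ ε = (n:ℝ) := by
    rw [← Real.rpow_add hnpos]
    simp
  have h8n : 8 * (n:ℝ) ^ ((1:ℝ) - ε) ≤ (n:ℝ) := by
    have hpos : (0:ℝ) ≤ (n:ℝ) ^ ((1:ℝ) - ε) := Real.rpow_nonneg (le_of_lt hnpos) _
    calc 8 * (n:ℝ) ^ ((1:ℝ) - ε) ≤ (n:ℝ)^ε * (n:ℝ) ^ ((1:ℝ) - ε) :=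
          mul_le_mul_of_nonneg_right h8 hpos
      _ = (n:ℝ) := by rw [mul_comm]; exact hsplit
  have hK8 : (K:ℝ) ≤ (n:ℝ)/8 := by
    calc (K:ℝ) ≤ (n:ℝ) ^ ((1:ℝ) - ε) := hKle
      _ ≤ (n:ℝ)/8 := by linarith
  have hKpos : (0:ℝ) < (K:ℝ) := by exact_mod_cast hK1
  -- nat arithmetic: 2K ≤ n
  have h2Kn : 2*K ≤ n := by
    have : (2*K : ℝ) ≤ (n:ℝ) := by push_cast; linarith
    exact_mod_cast this
  -- cast the main lower bound
  have hlb := EYhet_lb n R K hK1 hKR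
  have hlbR : ((n + 1 - 2*K : ℕ) : ℝ)^(2*K) / ((2:ℝ)^K * (K:ℝ)^K)
      ≤ ((EYhet n R K : ℚ) : ℝ) := by
    have := (Rat.cast_le (K := ℝ)).mpr hlb
    push_cast at this ⊢
    convert this using 2
  have hbase : (n:ℝ)/2 ≤ ((n + 1 - 2*K : ℕ) : ℝ) := by
    have hcast : ((n + 1 - 2*K : ℕ) : ℝ) = (n:ℝ) + 1 - 2*(K:ℝ) := by
      have : 2*K ≤ n + 1 := by omega
      push_cast [Nat.cast_sub this]
      ring
    rw [hcast]
    push_cast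
    linarith
  set base : ℝ := ((n + 1 - 2*K : ℕ) : ℝ) with hbasedef
  have hbase0 : (0:ℝ) ≤ base := le_trans (by linarith) hbase
  -- rewrite as a K-th power
  have hpowrw : base^(2*K) / ((2:ℝ)^K * (K:ℝ)^K) = (base^2 / (2*(K:ℝ)))^K := by
    rw [div_pow, pow_mul, mul_pow]
  have hB : (n:ℝ)^((1:ℝ)+ε)/8 ≤ base^2 / (2*(K:ℝ)) := by
    have h2K : (0:ℝ) < 2*(K:ℝ) := by linarith
    rw [div_le_div_iff₀ (by norm_num) h2K]
    have hb2 : (n:ℝ)^2/4 ≤ base^2 := by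
      have := hbase
      nlinarith
    have hKn : (K:ℝ) * (n:ℝ)^((1:ℝ)+ε) ≤ (n:ℝ)^2 := by
      have : (n:ℝ)^((1:ℝ)-ε) * (n:ℝ)^((1:ℝ)+ε) = (n:ℝ)^2 := by
        rw [← Real.rpow_add hnpos]
        norm_num
      have hp : (0:ℝ) ≤ (n:ℝ)^((1:ℝ)+ε) := Real.rpow_nonneg (le_of_lt hnpos) _
      calc (K:ℝ) * (n:ℝ)^((1:ℝ)+ε) ≤ (n:ℝ)^((1:ℝ)-ε) * (n:ℝ)^((1:ℝ)+ε) :=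
            mul_le_mul_of_nonneg_right hKle hp
        _ = (n:ℝ)^2 := this
    nlinarith [Real.rpow_nonneg (le_of_lt hnpos) ((1:ℝ)+ε)]
  have hB1 : (1:ℝ) ≤ base^2 / (2*(K:ℝ)) := le_trans h1 hB
  calc (n:ℝ)^((1:ℝ)+ε)/8 ≤ base^2 / (2*(K:ℝ)) := hB
    _ ≤ (base^2 / (2*(K:ℝ)))^K := le_self_pow₀ hB1 (by omega)
    _ = base^(2*K) / ((2:ℝ)^K * (K:ℝ)^K) := hpowrw.symm
    _ ≤ _ := hlbR


end
end

section
/- Fix 0 < ε < 1. If 1 ≤ k = k(n) ≤ n^{1-ε} and r = r(n) ≥ k(n), then the probability that a uniformly random r-coloring of the edges of K_n contains a heterochromatic k-matching tends to 1 as n → ∞. -/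
open Finset Filter

open scoped Classical

noncomputable section

-- ### auxiliary lemmas ###

def everts {n : ℕ} (M : Finset (Sym2 (Fin n))) : Finset (Fin n) :=
  M.biUnion fun e => Finset.univ.filter (· ∈ e)

lemma mem_everts {n : ℕ} {M : Finset (Sym2 (Fin n))} {v : Fin n} :
    v ∈ everts M ↔ ∃ e ∈ M, v ∈ e := by
  simp [everts]

lemma card_filter_mem_sym2 {n : ℕ} (e : Sym2 (Fin n)) :
    (Finset.univ.filter (· ∈ e)).card ≤ 2 := by
  induction e using Sym2.ind with
  | _ a b =>
    have h : (Finset.univ.filter (· ∈ s(a, b))) ⊆ {a, b} := by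
      intro v hv
      simp only [Finset.mem_filter, Sym2.mem_iff] at hv
      simp [hv.2]
    exact (Finset.card_le_card h).trans Finset.card_le_two

lemma card_everts {n : ℕ} (M : Finset (Sym2 (Fin n))) :
    (everts M).card ≤ 2 * M.card := by
  refine (Finset.card_biUnion_le).trans ?_
  calc ∑ e ∈ M, (Finset.univ.filter (· ∈ e)).card ≤ ∑ _e ∈ M, 2 :=
        Finset.sum_le_sum fun e _ => card_filter_mem_sym2 e
    _ = 2 * M.card := by rw [Finset.sum_const, smul_eq_mul, mul_comm]

/-- The deterministic greedy lemma. -/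
lemma greedy {n K R : ℕ} (hK : 1 ≤ K) (hKR : K ≤ R) (hn : 2 * K ≤ n)
    (c : Sym2 (Fin n) → Fin R)
    (hgood : ∀ W : Finset (Fin n), ∀ C : Finset (Fin R),
      W.card = 2 * (K - 1) → C.card = K - 1 →
      ∃ u v : Fin n, u ∉ W ∧ v ∉ W ∧ u ≠ v ∧ c s(u, v) ∉ C) :
    ∃ M ∈ matchings n K, Heterochromatic c M := by
  have hRn : K - 1 ≤ R := by omega
  have hgood' : ∀ W : Finset (Fin n), ∀ C : Finset (Fin R),
      W.card ≤ 2 * (K - 1) → C.card ≤ K - 1 →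
      ∃ u v : Fin n, u ∉ W ∧ v ∉ W ∧ u ≠ v ∧ c s(u, v) ∉ C := by
    intro W C hW hC
    obtain ⟨W', hWW', _, hW'⟩ := Finset.exists_subsuperset_card_eq (Finset.subset_univ W) hW
      (by simpa using by omega)
    obtain ⟨C', hCC', _, hC'⟩ := Finset.exists_subsuperset_card_eq (Finset.subset_univ C) hC
      (by simpa using hRn)
    obtain ⟨u, v, hu, hv, huv, hc⟩ := hgood W' C' hW' hC'
    exact ⟨u, v, fun h => hu (hWW' h), fun h => hv (hWW' h), huv, fun h => hc (hCC' h)⟩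
  have main : ∀ j, j ≤ K → ∃ M : Finset (Sym2 (Fin n)),
      M.card = j ∧ IsMatching M ∧ Heterochromatic c M := by
    intro j
    induction j with
    | zero => exact fun _ => ⟨∅, by simp [IsMatching, Heterochromatic]⟩
    | succ j ih =>
      intro hj
      obtain ⟨M, hcard, hmatch, het⟩ := ih (le_trans (Nat.le_succ j) hj)
      have hW : (everts M).card ≤ 2 * (K - 1) := by
        have := card_everts M
        omega
      have hC : (M.image c).card ≤ K - 1 := by
        have := Finset.card_image_le (s := M) (f := c)
        omega
      obtain ⟨u, v, hu, hv, huv, hc⟩ := hgood' (everts M) (M.image c) hW hC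
      have hnotmem : s(u, v) ∉ M := fun hmem => hu (mem_everts.2 ⟨s(u, v), hmem, by simp⟩)
      have hunotin : ∀ e ∈ M, u ∉ e := fun e he hue => hu (mem_everts.2 ⟨e, he, hue⟩)
      have hvnotin : ∀ e ∈ M, v ∉ e := fun e he hve => hv (mem_everts.2 ⟨e, he, hve⟩)
      refine ⟨insert s(u, v) M, ?_, ⟨?_, ?_⟩, ?_⟩
      · rw [Finset.card_insert_of_notMem hnotmem, hcard]
      · intro e he
        rcases Finset.mem_insert.1 he with rfl | he
        · simpa [Sym2.mk_isDiag_iff] using huv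
        · exact hmatch.1 e he
      · intro e he f hf hef w hwe hwf
        rcases Finset.mem_insert.1 he with he' | he' <;>
          rcases Finset.mem_insert.1 hf with hf' | hf'
        · exact hef (he'.trans hf'.symm)
        · subst he'
          rcases Sym2.mem_iff.1 hwe with h | h
          · exact hunotin f hf' (h ▸ hwf)
          · exact hvnotin f hf' (h ▸ hwf)
        · subst hf'
          rcases Sym2.mem_iff.1 hwf with h | h
          · exact hunotin e he' (h ▸ hwe)
          · exact hvnotin e he' (h ▸ hwe)
        · exact hmatch.2 e he' f hf' hef w hwe hwf
      · intro e he f hf hef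
        rcases Finset.mem_insert.1 he with rfl | he <;>
          rcases Finset.mem_insert.1 hf with rfl | hf
        · exact absurd rfl hef
        · exact fun hcc => hc (Finset.mem_image.2 ⟨f, hf, hcc.symm⟩)
        · exact fun hcc => hc (Finset.mem_image.2 ⟨e, he, hcc⟩)
        · exact het e he f hf hef
  obtain ⟨M, h1, h2, h3⟩ := main K le_rfl
  exact ⟨M, Finset.mem_filter.2 ⟨Finset.mem_univ _, h1, h2⟩, h3⟩

def eOut {n : ℕ} (W : Finset (Fin n)) : Finset (Sym2 (Fin n)) :=
  Finset.univ.filter fun e => ¬ e.IsDiag ∧ ∀ v ∈ e, v ∉ W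


lemma count_bad {n R : ℕ} (W : Finset (Fin n)) (C : Finset (Fin R)) :
    (Finset.univ.filter fun c : Sym2 (Fin n) → Fin R =>
        ∀ u v : Fin n, u ∉ W → v ∉ W → u ≠ v → c s(u, v) ∈ C).card
      = C.card ^ (eOut W).card * R ^ (Fintype.card (Sym2 (Fin n)) - (eOut W).card) := by
  have hset : (Finset.univ.filter fun c : Sym2 (Fin n) → Fin R =>
        ∀ u v : Fin n, u ∉ W → v ∉ W → u ≠ v → c s(u, v) ∈ C)
      = Fintype.piFinset (fun e : Sym2 (Fin n) =>
          if e ∈ eOut W then C else Finset.univ) := by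
    ext c
    simp only [Finset.mem_filter, Finset.mem_univ, true_and, Fintype.mem_piFinset]
    constructor
    · intro h e
      by_cases he : e ∈ eOut W
      · simp only [he, if_pos]
        induction e using Sym2.ind with
        | _ a b =>
          simp only [eOut, Finset.mem_filter, Sym2.mk_isDiag_iff, Sym2.mem_iff] at he
          simp only [eOut, Finset.mem_filter, Finset.mem_univ, true_and,
            Sym2.mk_isDiag_iff, Sym2.mem_iff] at he
          exact h a b (he.2 a (Or.inl rfl)) (he.2 b (Or.inr rfl)) he.1
      · simp [he]
    · intro h u v hu hv huv
      have he : s(u, v) ∈ eOut W := by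
        simp only [eOut, Finset.mem_filter, Sym2.mk_isDiag_iff, Sym2.mem_iff]
        refine ⟨Finset.mem_univ _, huv, ?_⟩
        rintro w (rfl | rfl) <;> assumption
      simpa [he] using h s(u, v)
  rw [hset, Fintype.card_piFinset]
  have hfun : ∀ e : Sym2 (Fin n), (if e ∈ eOut W then C else (Finset.univ : Finset (Fin R))).card
      = if e ∈ eOut W then C.card else R := by
    intro e; split <;> simp
  simp only [hfun]
  rw [Finset.prod_ite, Finset.prod_const, Finset.prod_const]
  have h1 : (Finset.univ.filter (· ∈ eOut W)).card = (eOut W).card := by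
    congr 1; ext e; simp
  have h2 : (Finset.univ.filter (fun e : Sym2 (Fin n) => ¬ e ∈ eOut W)).card
      = Fintype.card (Sym2 (Fin n)) - (eOut W).card := by
    have := Finset.card_filter_add_card_filter_not
      (s := (Finset.univ : Finset (Sym2 (Fin n)))) (p := (· ∈ eOut W))
    rw [Finset.card_univ] at this
    omega
  rw [h1, h2]

lemma eOut_lb {n : ℕ} (W : Finset (Fin n)) :
    (n - W.card) * (n - W.card) - (n - W.card) ≤ 2 * (eOut W).card := by
  set S : Finset (Fin n × Fin n) := (Wᶜ).offDiag with hS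
  have hcardS : S.card = (n - W.card) * (n - W.card) - (n - W.card) := by
    rw [hS, Finset.offDiag_card, Finset.card_compl, Fintype.card_fin]
  have himage : S.image (fun p => s(p.1, p.2)) ⊆ eOut W := by
    intro e he
    obtain ⟨p, hp, rfl⟩ := Finset.mem_image.1 he
    rw [Finset.mem_offDiag] at hp
    simp only [eOut, Finset.mem_filter, Finset.mem_univ, true_and, Sym2.mk_isDiag_iff,
      Sym2.mem_iff]
    refine ⟨hp.2.2, ?_⟩
    rintro v (rfl | rfl)
    · exact Finset.mem_compl.1 hp.1
    · exact Finset.mem_compl.1 hp.2.1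
  have h2to1 : S.card ≤ 2 * (S.image (fun p => s(p.1, p.2))).card := by
    refine Finset.card_le_mul_card_image S 2 ?_
    intro b hb
    obtain ⟨p, hp, rfl⟩ := Finset.mem_image.1 hb
    have hsub : S.filter (fun q => s(q.1, q.2) = s(p.1, p.2)) ⊆ {p, (p.2, p.1)} := by
      intro q hq
      have := (Finset.mem_filter.1 hq).2
      rw [Sym2.eq_iff] at this
      rcases this with ⟨h1, h2⟩ | ⟨h1, h2⟩
      · simp [Finset.mem_insert, Prod.ext_iff, h1, h2]
      · simp [Finset.mem_insert, Prod.ext_iff, h1, h2]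
    exact (Finset.card_le_card hsub).trans Finset.card_le_two
  calc (n - W.card) * (n - W.card) - (n - W.card) = S.card := hcardS.symm
    _ ≤ 2 * (S.image (fun p => s(p.1, p.2))).card := h2to1
    _ ≤ 2 * (eOut W).card := by
        exact Nat.mul_le_mul_left 2 (Finset.card_le_card himage)

def Bad (n R K : ℕ) (c : Sym2 (Fin n) → Fin R) : Prop :=
  ∃ W : Finset (Fin n), ∃ C : Finset (Fin R), W.card = 2 * (K - 1) ∧ C.card = K - 1 ∧
    ∀ u v : Fin n, u ∉ W → v ∉ W → u ≠ v → c s(u, v) ∈ C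

/-- monotone step at nat level -/
lemma mono_pow {a R q E D : ℕ} (haR : a ≤ R) (hqE : q ≤ E) (hED : E ≤ D) :
    a ^ E * R ^ (D - E) ≤ a ^ q * R ^ (D - q) := by
  have h1 : a ^ E = a ^ q * a ^ (E - q) := by rw [← pow_add]; congr 1; omega
  have h2 : R ^ (D - q) = R ^ (E - q) * R ^ (D - E) := by rw [← pow_add]; congr 1; omega
  rw [h1, h2, mul_assoc]
  exact Nat.mul_le_mul_left _ (Nat.mul_le_mul_right _ (Nat.pow_le_pow_left haR _))

lemma card_bad_le (n R K : ℕ) (hKR : K ≤ R) :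
    (Finset.univ.filter (Bad n R K)).card
      ≤ 2 ^ n * R.choose (K - 1) *
        ((K - 1) ^ (((n - 2 * (K - 1)) * (n - 2 * (K - 1)) - (n - 2 * (K - 1))) / 2)
          * R ^ (Fintype.card (Sym2 (Fin n))
            - ((n - 2 * (K - 1)) * (n - 2 * (K - 1)) - (n - 2 * (K - 1))) / 2)) := by
  set m := n - 2 * (K - 1) with hm
  set q := (m * m - m) / 2 with hq
  set D := Fintype.card (Sym2 (Fin n)) with hD
  set T := (Finset.univ.filter fun W : Finset (Fin n) => W.card = 2 * (K - 1)) ×ˢ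
    (Finset.univ.filter fun C : Finset (Fin R) => C.card = K - 1) with hT
  have hsub : Finset.univ.filter (Bad n R K) ⊆ T.biUnion fun p =>
      Finset.univ.filter fun c : Sym2 (Fin n) → Fin R =>
        ∀ u v : Fin n, u ∉ p.1 → v ∉ p.1 → u ≠ v → c s(u, v) ∈ p.2 := by
    intro c hc
    obtain ⟨W, C, hW, hC, hbad⟩ := (Finset.mem_filter.1 hc).2
    refine Finset.mem_biUnion.2 ⟨(W, C), ?_, ?_⟩
    · rw [hT]
      refine Finset.mem_product.2 ⟨?_, ?_⟩ <;> simp [hW, hC]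
    · exact Finset.mem_filter.2 ⟨Finset.mem_univ _, hbad⟩
  refine (Finset.card_le_card hsub).trans ?_
  refine (Finset.card_biUnion_le).trans ?_
  have hterm : ∀ p ∈ T, (Finset.univ.filter fun c : Sym2 (Fin n) → Fin R =>
        ∀ u v : Fin n, u ∉ p.1 → v ∉ p.1 → u ≠ v → c s(u, v) ∈ p.2).card
      ≤ (K - 1) ^ q * R ^ (D - q) := by
    intro p hp
    rw [hT, Finset.mem_product, Finset.mem_filter, Finset.mem_filter] at hp
    rw [count_bad p.1 p.2, hp.2.2, ← hD]
    refine mono_pow (by omega) ?_ (Finset.card_le_univ _)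
    have := eOut_lb p.1
    rw [hp.1.2, ← hm] at this
    omega
  refine (Finset.sum_le_sum hterm).trans ?_
  rw [Finset.sum_const, smul_eq_mul]
  refine Nat.mul_le_mul_right _ ?_
  rw [hT, Finset.card_product]
  refine Nat.mul_le_mul ?_ ?_
  · refine (Finset.card_filter_le _ _).trans ?_
    rw [Finset.card_univ, Fintype.card_finset, Fintype.card_fin]
  · have : (Finset.univ.filter fun C : Finset (Fin R) => C.card = K - 1)
        = Finset.powersetCard (K - 1) Finset.univ := by
      ext C; simp [Finset.mem_powersetCard]
    rw [this, Finset.card_powersetCard, Finset.card_univ, Fintype.card_fin]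


lemma cross_pow {K R q : ℕ} (hK : 1 ≤ K) (hKR : K ≤ R) (hqK : K - 1 ≤ q) :
    R ^ (K - 1) * K ^ q ≤ K ^ (K - 1) * R ^ q := by
  have h1 : K ^ q = K ^ (K - 1) * K ^ (q - (K - 1)) := by rw [← pow_add]; congr 1; omega
  have h2 : R ^ q = R ^ (K - 1) * R ^ (q - (K - 1)) := by rw [← pow_add]; congr 1; omega
  calc R ^ (K - 1) * K ^ q = K ^ (K - 1) * (R ^ (K - 1) * K ^ (q - (K - 1))) := by
        rw [h1]; ring
    _ ≤ K ^ (K - 1) * (R ^ (K - 1) * R ^ (q - (K - 1))) :=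
        Nat.mul_le_mul_left _ (Nat.mul_le_mul_left _ (Nat.pow_le_pow_left hKR _))
    _ = K ^ (K - 1) * R ^ q := by rw [h2]

lemma nat_final (n R K : ℕ) (hK : 1 ≤ K) (hKR : K ≤ R)
    (hqK : K - 1 ≤ ((n - 2 * (K - 1)) * (n - 2 * (K - 1)) - (n - 2 * (K - 1))) / 2) :
    (Finset.univ.filter (Bad n R K)).card
        * K ^ (((n - 2 * (K - 1)) * (n - 2 * (K - 1)) - (n - 2 * (K - 1))) / 2)
      ≤ (2 ^ n * K ^ (K - 1)
          * (K - 1) ^ (((n - 2 * (K - 1)) * (n - 2 * (K - 1)) - (n - 2 * (K - 1))) / 2))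
        * R ^ (Fintype.card (Sym2 (Fin n))) := by
  set m := n - 2 * (K - 1) with hm
  set q := (m * m - m) / 2 with hq
  set D := Fintype.card (Sym2 (Fin n)) with hDdef
  have hqD : q ≤ D := by
    have hmn : m ≤ n := by omega
    have hD : D = (n + 1) * n / 2 := by
      show Fintype.card (Sym2 (Fin n)) = _
      rw [Sym2.card, Fintype.card_fin, Nat.choose_two_right]
      simp
    rw [hD]
    refine Nat.div_le_div_right ?_
    have h1 : m * m ≤ n * n := Nat.mul_le_mul hmn hmn
    have h2 : n * n ≤ (n + 1) * n := Nat.mul_le_mul_right n (by omega)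
    omega
  calc (Finset.univ.filter (Bad n R K)).card * K ^ q
      ≤ (2 ^ n * R.choose (K - 1) * ((K - 1) ^ q * R ^ (D - q))) * K ^ q :=
        Nat.mul_le_mul_right _ (card_bad_le n R K hKR)
    _ ≤ (2 ^ n * R ^ (K - 1) * ((K - 1) ^ q * R ^ (D - q))) * K ^ q := by
        refine Nat.mul_le_mul_right _ (Nat.mul_le_mul_right _
          (Nat.mul_le_mul_left _ (Nat.choose_le_pow _ _)))
    _ = 2 ^ n * (K - 1) ^ q * R ^ (D - q) * (R ^ (K - 1) * K ^ q) := by ring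
    _ ≤ 2 ^ n * (K - 1) ^ q * R ^ (D - q) * (K ^ (K - 1) * R ^ q) :=
        Nat.mul_le_mul_left _ (cross_pow hK hKR hqK)
    _ = (2 ^ n * K ^ (K - 1) * (K - 1) ^ q) * (R ^ (D - q) * R ^ q) := by ring
    _ = (2 ^ n * K ^ (K - 1) * (K - 1) ^ q) * R ^ D := by
        rw [← pow_add]; congr 2; omega

lemma pr_bad_le (n R K : ℕ) (hK : 1 ≤ K) (hKR : K ≤ R)
    (hqK : K - 1 ≤ ((n - 2 * (K - 1)) * (n - 2 * (K - 1)) - (n - 2 * (K - 1))) / 2) :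
    ((Pr n R (Bad n R K) : ℚ) : ℝ)
      ≤ (2 ^ n * (K : ℝ) ^ (K - 1)
          * ((K - 1 : ℕ) : ℝ) ^ (((n - 2 * (K - 1)) * (n - 2 * (K - 1)) - (n - 2 * (K - 1))) / 2))
        / (K : ℝ) ^ (((n - 2 * (K - 1)) * (n - 2 * (K - 1)) - (n - 2 * (K - 1))) / 2) := by
  set q := ((n - 2 * (K - 1)) * (n - 2 * (K - 1)) - (n - 2 * (K - 1))) / 2 with hq
  set D := Fintype.card (Sym2 (Fin n)) with hD
  have hR1 : 1 ≤ R := hK.trans hKR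
  have hcardfun : Fintype.card (Sym2 (Fin n) → Fin R) = R ^ D := by
    rw [Fintype.card_fun, Fintype.card_fin]
  have hRD : (0 : ℝ) < (R : ℝ) ^ D := by positivity
  have hKq : (0 : ℝ) < (K : ℝ) ^ q := by
    have : (0:ℝ) < (K:ℝ) := by exact_mod_cast hK
    positivity
  have hPr : ((Pr n R (Bad n R K) : ℚ) : ℝ)
      = ((Finset.univ.filter (Bad n R K)).card : ℝ) / ((R : ℝ) ^ D) := by
    rw [Pr, hcardfun]
    push_cast
    ring
  rw [hPr, div_le_div_iff₀ hRD hKq]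
  have := nat_final n R K hK hKR hqK
  rw [← hq, ← hD] at this
  exact_mod_cast this

lemma Pr_le_one (n R : ℕ) (P : (Sym2 (Fin n) → Fin R) → Prop) : Pr n R P ≤ 1 := by
  rw [Pr]
  rcases Nat.eq_zero_or_pos (Fintype.card (Sym2 (Fin n) → Fin R)) with h | h
  · rw [h]; norm_num
  · rw [div_le_one (by exact_mod_cast h)]
    exact_mod_cast (Finset.card_filter_le _ _).trans (le_of_eq (Finset.card_univ))

lemma Pr_nonneg (n R : ℕ) (P : (Sym2 (Fin n) → Fin R) → Prop) : 0 ≤ Pr n R P := by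
  rw [Pr]; positivity

lemma Pr_mono (n R : ℕ) {P Q : (Sym2 (Fin n) → Fin R) → Prop}
    (h : ∀ c, P c → Q c) : Pr n R P ≤ Pr n R Q := by
  rw [Pr, Pr]
  have hcard : (Finset.univ.filter P).card ≤ (Finset.univ.filter Q).card :=
    Finset.card_le_card (fun c hc =>
      Finset.mem_filter.2 ⟨Finset.mem_univ _, h c (Finset.mem_filter.1 hc).2⟩)
  have h0 : (0:ℚ) ≤ (Fintype.card (Sym2 (Fin n) → Fin R) : ℚ) := by positivity
  rcases h0.eq_or_lt with h0 | h0
  · rw [← h0, div_zero, div_zero]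
  · exact (div_le_div_iff_of_pos_right h0).2 (by exact_mod_cast hcard)

lemma Pr_compl (n R : ℕ) (hR : 1 ≤ R) (hn : True) (P : (Sym2 (Fin n) → Fin R) → Prop) :
    1 - Pr n R (fun c => ¬ P c) ≤ Pr n R P := by
  have : Nonempty (Sym2 (Fin n) → Fin R) := ⟨fun _ => ⟨0, hR⟩⟩
  have hpos : 0 < Fintype.card (Sym2 (Fin n) → Fin R) := Fintype.card_pos
  have hsum := Finset.card_filter_add_card_filter_not
    (s := (Finset.univ : Finset (Sym2 (Fin n) → Fin R))) (p := P)
  rw [Finset.card_univ] at hsum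
  rw [Pr, Pr, sub_le_iff_le_add, ← add_div, le_div_iff₀ (by exact_mod_cast hpos)]
  rw [one_mul]
  have : Fintype.card (Sym2 (Fin n) → Fin R)
      ≤ (Finset.univ.filter P).card + (Finset.univ.filter fun c => ¬ P c).card := by omega
  have heq : (@Finset.filter (Sym2 (Fin n) → Fin R) (fun c => ¬P c)
        (fun a => instDecidableNot) Finset.univ)
      = (@Finset.filter (Sym2 (Fin n) → Fin R) (fun c => ¬P c)
        (fun a => Classical.propDecidable (¬P a)) Finset.univ) := by
    congr!
  rw [heq] at this
  exact_mod_cast this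

lemma tendsto_bound (ε : ℝ) (hε0 : 0 < ε) (hε1 : ε < 1) :
    Tendsto (fun x : ℝ => x + x ^ (1 - ε) * Real.log x - x ^ (1 + ε) / 16) atTop atBot := by
  have hfac : Tendsto (fun x : ℝ =>
      x ^ (1 + ε) * (x ^ (-ε) + x ^ (-(2*ε)) * Real.log x - 1/16)) atTop atBot := by
    refine Tendsto.atTop_mul_neg (by norm_num : (0:ℝ) + 0 - 1/16 < 0)
      (tendsto_rpow_atTop (by linarith)) ?_
    refine Tendsto.sub (Tendsto.add (tendsto_rpow_neg_atTop hε0) ?_) tendsto_const_nhds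
    have h1 : Tendsto (fun x : ℝ => Real.log x / x ^ (2*ε)) atTop (nhds 0) :=
      (isLittleO_log_rpow_atTop (by linarith)).tendsto_div_nhds_zero
    refine h1.congr' ?_
    filter_upwards [eventually_gt_atTop (0:ℝ)] with x hx
    rw [Real.rpow_neg hx.le, div_eq_mul_inv, mul_comm]
  refine hfac.congr' ?_
  filter_upwards [eventually_gt_atTop (0:ℝ)] with x hx
  have h1 : x ^ (1+ε) * x ^ (-ε) = x := by
    rw [← Real.rpow_add hx]; norm_num
  have h2 : x ^ (1+ε) * x ^ (-(2*ε)) = x ^ (1-ε) := by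
    rw [← Real.rpow_add hx]; ring_nf
  calc x ^ (1+ε) * (x ^ (-ε) + x ^ (-(2*ε)) * Real.log x - 1/16)
      = x ^ (1+ε) * x ^ (-ε) + (x ^ (1+ε) * x ^ (-(2*ε))) * Real.log x
        - x ^ (1+ε) / 16 := by ring
    _ = x + x ^ (1-ε) * Real.log x - x ^ (1+ε)/16 := by rw [h1, h2]

/-- if `1 ≤ k(n) ≤ n^(1-ε)` and `r(n) ≥ k(n)`, then the
probability of containing a heterochromatic `k(n)`-matching tends to `1`. -/
theorem hetero_matching_exists (ε : ℝ) (hε0 : 0 < ε) (hε1 : ε < 1)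
    (k r : ℕ → ℕ)
    (h : ∀ᶠ n in atTop,
      1 ≤ k n ∧ (k n : ℝ) ≤ (n : ℝ) ^ ((1 : ℝ) - ε) ∧ k n ≤ r n) :
    Tendsto
      (fun n =>
        ((Pr n (r n)
            (fun c => ∃ M ∈ matchings n (k n), Heterochromatic c M) : ℚ) : ℝ))
      atTop (nhds 1) := by
  set U : ℕ → ℝ := fun n =>
    Real.exp ((n : ℝ) + (n : ℝ) ^ (1 - ε) * Real.log n - (n : ℝ) ^ (1 + ε) / 16) with hUdef
  have hUto : Tendsto U atTop (nhds 0) := by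
    have h1 := (Real.tendsto_exp_atBot.comp (tendsto_bound ε hε0 hε1)).comp
      tendsto_natCast_atTop_atTop
    exact h1
  have hx4 : ∀ᶠ x : ℝ in atTop, x ^ (-ε) < 1 / 4 :=
    (tendsto_rpow_neg_atTop hε0).eventually_lt_const (by norm_num)
  have hx4' : ∀ᶠ n : ℕ in atTop, ((n : ℝ)) ^ (-ε) < 1 / 4 :=
    tendsto_natCast_atTop_atTop.eventually hx4
  have hev : ∀ᶠ n : ℕ in atTop,
      1 - U n ≤ ((Pr n (r n)
        (fun c => ∃ M ∈ matchings n (k n), Heterochromatic c M) : ℚ) : ℝ) := by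
    filter_upwards [h, hx4', eventually_ge_atTop 100] with n hn hn4 hn100
    obtain ⟨hK1, hKle, hKR⟩ := hn
    set K := k n with hKdef
    set R := r n with hRdef
    have hn0 : (0 : ℝ) < (n : ℝ) := by
      have : (0:ℕ) < n := by omega
      exact_mod_cast this
    have hn1 : (1 : ℝ) ≤ (n : ℝ) := by
      have : (1:ℕ) ≤ n := by omega
      exact_mod_cast this
    have hKn4 : 4 * K ≤ n := by
      have hstep : (n : ℝ) ^ ((1:ℝ) - ε) ≤ (n : ℝ) / 4 := by
        calc (n : ℝ) ^ ((1:ℝ) - ε) = (n : ℝ) ^ (1:ℝ) * (n : ℝ) ^ (-ε) := by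
              rw [← Real.rpow_add hn0]; ring_nf
          _ ≤ (n : ℝ) * (1 / 4) := by
              rw [Real.rpow_one]
              exact mul_le_mul_of_nonneg_left hn4.le hn0.le
          _ = (n : ℝ) / 4 := by ring
      have : ((4 * K : ℕ) : ℝ) ≤ (n : ℝ) := by
        push_cast
        nlinarith [hKle.trans hstep]
      exact_mod_cast this
    have hR1 : 1 ≤ R := hK1.trans hKR
    set m := n - 2 * (K - 1) with hm
    set q := (m * m - m) / 2 with hq
    -- nat facts
    have hnm : n ≤ 2 * m := by omega
    have hqK : K - 1 ≤ q := by
      have h6m : 6 ≤ m := by omega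
      have hA : 6 * m ≤ m * m := Nat.mul_le_mul_right m h6m
      omega
    have hq16 : n * n ≤ 16 * q := by
      have hB4A : n * n ≤ 4 * (m * m) := by
        calc n * n ≤ (2 * m) * (2 * m) := Nat.mul_le_mul hnm hnm
          _ = 4 * (m * m) := by ring
      have h100n : 100 * n ≤ n * n := Nat.mul_le_mul_right n (by omega)
      omega
    -- real quantities
    have hKpos : (0 : ℝ) < (K : ℝ) := by exact_mod_cast hK1
    have hlog : (0 : ℝ) ≤ Real.log n := Real.log_nonneg hn1
    -- step 1 : probability bound
    have step1 := pr_bad_le n R K hK1 hKR (by rw [← hq]; exact hqK)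
    rw [← hq] at step1
    -- step 2 : bound the RHS by U n
    have hsub : ((K - 1 : ℕ) : ℝ) = (K : ℝ) - 1 := by
      push_cast [hK1]
      ring
    have hr0 : ((K - 1 : ℕ) : ℝ) / K ≤ Real.exp (-(1 / K)) := by
      rw [hsub]
      have hexp := Real.add_one_le_exp (-(1 / (K:ℝ)))
      have : ((K:ℝ) - 1) / K = 1 - 1 / K := by field_simp
      rw [this]
      linarith
    have hr0n : (0:ℝ) ≤ ((K - 1 : ℕ) : ℝ) / K := by positivity
    have e1 : (2 : ℝ) ^ n ≤ Real.exp n := by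
      calc (2 : ℝ) ^ n ≤ (Real.exp 1) ^ n := by
            refine pow_le_pow_left₀ (by norm_num) ?_ n
            linarith [Real.add_one_le_exp (1:ℝ)]
        _ = Real.exp n := by rw [← Real.exp_nat_mul]; ring_nf
    have e2 : (K : ℝ) ^ (K - 1) ≤ Real.exp ((K : ℝ) * Real.log n) := by
      have hKn : (K : ℝ) ≤ (n : ℝ) := by
        have : K ≤ n := by omega
        exact_mod_cast this
      calc (K : ℝ) ^ (K - 1) ≤ (n : ℝ) ^ (K - 1) := pow_le_pow_left₀ hKpos.le hKn _
        _ ≤ (n : ℝ) ^ K := pow_le_pow_right₀ hn1 (by omega)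
        _ = (Real.exp (Real.log n)) ^ K := by rw [Real.exp_log hn0]
        _ = Real.exp ((K : ℝ) * Real.log n) := by rw [← Real.exp_nat_mul]
    have e3 : (((K - 1 : ℕ) : ℝ) / K) ^ q ≤ Real.exp (-((q : ℝ) / K)) := by
      calc (((K - 1 : ℕ) : ℝ) / K) ^ q ≤ (Real.exp (-(1 / K))) ^ q :=
            pow_le_pow_left₀ hr0n hr0 q
        _ = Real.exp ((q : ℝ) * (-(1 / K))) := by rw [← Real.exp_nat_mul]
        _ = Real.exp (-((q : ℝ) / K)) := by ring_nf
    have step2 : (2 ^ n * (K : ℝ) ^ (K - 1) * ((K - 1 : ℕ) : ℝ) ^ q) / (K : ℝ) ^ q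
        ≤ U n := by
      have hrw : (2 ^ n * (K : ℝ) ^ (K - 1) * ((K - 1 : ℕ) : ℝ) ^ q) / (K : ℝ) ^ q
          = 2 ^ n * (K : ℝ) ^ (K - 1) * (((K - 1 : ℕ) : ℝ) / K) ^ q := by
        rw [div_pow]
        ring
      rw [hrw]
      have hexp1 : (0:ℝ) ≤ Real.exp ((K:ℝ) * Real.log n) := (Real.exp_pos _).le
      have hprod : 2 ^ n * (K : ℝ) ^ (K - 1) * (((K - 1 : ℕ) : ℝ) / K) ^ q
          ≤ Real.exp n * Real.exp ((K:ℝ) * Real.log n) * Real.exp (-((q : ℝ) / K)) := by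
        have t1 : (0:ℝ) ≤ (2:ℝ)^n := by positivity
        have t2 : (0:ℝ) ≤ (K:ℝ)^(K-1) := by positivity
        have t3 : (0:ℝ) ≤ (((K - 1 : ℕ) : ℝ) / K) ^ q := by positivity
        calc 2 ^ n * (K : ℝ) ^ (K - 1) * (((K - 1 : ℕ) : ℝ) / K) ^ q
            ≤ Real.exp n * Real.exp ((K:ℝ) * Real.log n) * (((K - 1 : ℕ) : ℝ) / K) ^ q := by
              refine mul_le_mul_of_nonneg_right (mul_le_mul e1 e2 t2 (Real.exp_pos _).le) t3
          _ ≤ Real.exp n * Real.exp ((K:ℝ) * Real.log n) * Real.exp (-((q : ℝ) / K)) := by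
              refine mul_le_mul_of_nonneg_left e3 (by positivity)
      refine hprod.trans ?_
      rw [← Real.exp_add, ← Real.exp_add, hUdef]
      refine Real.exp_le_exp.2 ?_
      have hKlog : (K : ℝ) * Real.log n ≤ (n:ℝ) ^ ((1:ℝ) - ε) * Real.log n :=
        mul_le_mul_of_nonneg_right hKle hlog
      have hqKdiv : (n:ℝ) ^ ((1:ℝ) + ε) / 16 ≤ (q : ℝ) / K := by
        have hq' : (n:ℝ) * n ≤ 16 * q := by exact_mod_cast hq16
        have hKub : (K : ℝ) ≤ (n:ℝ) ^ ((1:ℝ) - ε) := hKle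
        have hrpow : (n:ℝ) ^ ((1:ℝ) + ε) = (n:ℝ) * n / (n:ℝ) ^ ((1:ℝ) - ε) := by
          rw [show (1:ℝ) + ε = 2 - (1 - ε) by ring, Real.rpow_sub hn0]
          congr 1
          rw [show (2:ℝ) = ((2:ℕ):ℝ) by norm_num, Real.rpow_natCast]
          ring
        rw [hrpow, div_div]
        have h1 : (n:ℝ) * n / ((n:ℝ) ^ ((1:ℝ) - ε) * 16) ≤ (16 * (q:ℝ)) / (16 * (K:ℝ)) := by
          refine div_le_div₀ (by positivity) hq' (by positivity) ?_
          linarith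
        have h2 : (16 * (q:ℝ)) / (16 * (K:ℝ)) = (q:ℝ) / K :=
          mul_div_mul_left _ _ (by norm_num)
        linarith
      linarith
    -- complement & greedy
    have hgreedy : ∀ c : Sym2 (Fin n) → Fin R, ¬ Bad n R K c →
        ∃ M ∈ matchings n K, Heterochromatic c M := by
      intro c hc
      refine greedy hK1 hKR (by omega) c ?_
      intro W C hW hC
      rw [Bad] at hc
      push_neg at hc
      exact hc W C hW hC
    have hcompl : (1 : ℚ) - Pr n R (Bad n R K)
        ≤ Pr n R (fun c => ∃ M ∈ matchings n K, Heterochromatic c M) := by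
      have hmono : Pr n R (fun c => ¬ ∃ M ∈ matchings n K, Heterochromatic c M)
          ≤ Pr n R (Bad n R K) := by
        refine Pr_mono n R ?_
        intro c hc
        by_contra hbad
        exact hc (hgreedy c hbad)
      have hcp := Pr_compl n R hR1 trivial
        (fun c => ∃ M ∈ matchings n K, Heterochromatic c M)
      linarith
    -- put together
    have hcast : ((1 : ℚ) - Pr n R (Bad n R K) : ℚ) = 1 - Pr n R (Bad n R K) := rfl
    have hreal : (1:ℝ) - ((Pr n R (Bad n R K) : ℚ) : ℝ)
        ≤ ((Pr n R (fun c => ∃ M ∈ matchings n K, Heterochromatic c M) : ℚ) : ℝ) := by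
      have := hcompl
      push_cast at this ⊢
      exact_mod_cast this
    have hBU : ((Pr n R (Bad n R K) : ℚ) : ℝ) ≤ U n := step1.trans step2
    linarith
  refine tendsto_of_tendsto_of_tendsto_of_le_of_le'
    (g := fun n => 1 - U n) (h := fun _ => (1:ℝ)) ?_ tendsto_const_nhds hev ?_
  · have h1 : Tendsto (fun _ : ℕ => (1:ℝ)) atTop (nhds 1) := tendsto_const_nhds
    simpa using h1.sub hUto
  · filter_upwards with n
    exact_mod_cast Pr_le_one n (r n) _

end
end

section
/- If 2 ≤ k = k(n) ≤ log n and r = r(n) ≥ k(n) - 1, then the probability that a uniformly random r-coloring of the edges of K_n contains a heterochromatic tree on k vertices tends to 1 as n → ∞. -/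
open Finset Filter

open scoped Classical

noncomputable section

lemma exists_transversal {α β : Type*} [DecidableEq α] [DecidableEq β]
    (f : α → β) (t : Finset α) :
    ∃ u ⊆ t, u.card = (t.image f).card ∧ Set.InjOn f ↑u := by
  induction t using Finset.induction_on with
  | empty => exact ⟨∅, by simp⟩
  | @insert a t ha ih =>
    obtain ⟨u, hu, hcard, hinj⟩ := ih
    by_cases hfa : f a ∈ t.image f
    · refine ⟨u, hu.trans (Finset.subset_insert _ _), ?_, hinj⟩
      rw [Finset.image_insert, Finset.insert_eq_self.mpr hfa]
      exact hcard
    · have hau : a ∉ u := fun h => ha (hu h)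
      refine ⟨insert a u, Finset.insert_subset_insert _ hu, ?_, ?_⟩
      · rw [Finset.image_insert, Finset.card_insert_of_notMem hau,
          Finset.card_insert_of_notMem hfa, hcard]
      · rw [Finset.coe_insert, Set.injOn_insert (by simpa using hau)]
        refine ⟨hinj, ?_⟩
        rintro ⟨x, hx, hfx⟩
        exact hfa (Finset.mem_image.mpr ⟨x, hu hx, hfx⟩)


lemma card_filter_forall_mem {ι κ : Type*} [Fintype ι] [DecidableEq ι] [Fintype κ]
    [DecidableEq κ] (S : Finset ι) (A : Finset κ) :
    (Finset.univ.filter fun c : ι → κ => ∀ i ∈ S, c i ∈ A).card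
      = A.card ^ S.card * (Fintype.card κ) ^ (Fintype.card ι - S.card) := by
  have h1 : (Finset.univ.filter fun c : ι → κ => ∀ i ∈ S, c i ∈ A)
      = Fintype.piFinset (fun i => if i ∈ S then A else Finset.univ) := by
    ext c
    simp only [Finset.mem_filter, Finset.mem_univ, true_and, Fintype.mem_piFinset]
    constructor
    · intro h i
      by_cases hi : i ∈ S <;> simp [hi, h i]
    · intro h i hi
      simpa [hi] using h i
  rw [h1, Fintype.card_piFinset]
  have h2 : ∀ i : ι, (if i ∈ S then A else (Finset.univ : Finset κ)).card
      = if i ∈ S then A.card else Fintype.card κ := by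
    intro i; split <;> simp [Finset.card_univ]
  simp_rw [h2]
  rw [Finset.prod_ite, Finset.prod_const, Finset.prod_const]
  congr 1
  · congr 1
    rw [Finset.filter_mem_eq_inter, Finset.univ_inter]
  · congr 1
    rw [Finset.filter_not, Finset.filter_mem_eq_inter, Finset.univ_inter,
      Finset.card_sdiff_of_subset (Finset.subset_univ S), Finset.card_univ]

lemma star_tree {n r k : ℕ} (hk2 : 2 ≤ k) (c : Sym2 (Fin n) → Fin r) (v0 : Fin n)
    (L : Finset (Fin n)) (h0 : v0 ∉ L) (hL : L.card = k - 1)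
    (hdist : Set.InjOn (fun i => c s(v0, i)) ↑L) :
    ∃ S : Finset (Fin n), ∃ T, S.card = k ∧ IsTreeOn S T ∧ Heterochromatic c T := by
  have hinj : Set.InjOn (fun i => s(v0, i)) ↑L := by
    intro i hi j hj hij
    simp only [Sym2.eq_iff] at hij
    rcases hij with ⟨-, h⟩ | ⟨h1, -⟩
    · exact h
    · exact absurd hj (h1 ▸ h0)
  have hTcard : (L.image fun i => s(v0, i)).card = k - 1 := by
    rw [Finset.card_image_of_injOn hinj, hL]
  have hScard : (insert v0 L).card = k := by
    rw [Finset.card_insert_of_notMem h0, hL]; omega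
  refine ⟨insert v0 L, L.image fun i => s(v0, i), hScard, ⟨?_, ?_, ?_, ?_⟩, ?_⟩
  · rw [hTcard, hScard]; omega
  · intro e he
    obtain ⟨i, hi, rfl⟩ := Finset.mem_image.mp he
    rw [Sym2.mk_isDiag_iff]
    rintro rfl
    exact h0 hi
  · intro e he v hv
    obtain ⟨i, hi, rfl⟩ := Finset.mem_image.mp he
    rw [Sym2.mem_iff] at hv
    rcases hv with rfl | rfl
    · exact Finset.mem_insert_self _ _
    · exact Finset.mem_insert_of_mem hi
  · have adj : ∀ u ∈ L,
        (SimpleGraph.fromEdgeSet (↑(L.image fun i => s(v0, i)) : Set (Sym2 (Fin n)))).Adj v0 u := by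
      intro u hu
      rw [SimpleGraph.fromEdgeSet_adj]
      constructor
      · simp only [Finset.coe_image, Set.mem_image, Finset.mem_coe]
        exact ⟨u, hu, rfl⟩
      · rintro rfl
        exact h0 hu
    have reach : ∀ u ∈ insert v0 L,
        (SimpleGraph.fromEdgeSet (↑(L.image fun i => s(v0, i)) : Set (Sym2 (Fin n)))).Reachable v0 u := by
      intro u hu
      rcases Finset.mem_insert.mp hu with rfl | hu
      · exact SimpleGraph.Reachable.refl _
      · exact (adj u hu).reachable
    intro u hu v hv
    exact (reach u hu).symm.trans (reach v hv)
  · intro e he f hf hef hc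
    obtain ⟨i, hi, rfl⟩ := Finset.mem_image.mp he
    obtain ⟨j, hj, rfl⟩ := Finset.mem_image.mp hf
    exact hef (by rw [hdist hi hj hc])

lemma card_bad_le_s19 {ι κ : Type*} [Fintype ι] [DecidableEq ι] [Fintype κ] [DecidableEq κ]
    (S : Finset ι) (j : ℕ) (hj : j ≤ Fintype.card κ) :
    (Finset.univ.filter fun c : ι → κ => (S.image c).card ≤ j).card
      ≤ (Fintype.card κ).choose j * (j ^ S.card * Fintype.card κ ^ (Fintype.card ι - S.card)) := by
  have hsub : (Finset.univ.filter fun c : ι → κ => (S.image c).card ≤ j)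
      ⊆ (Finset.powersetCard j (Finset.univ : Finset κ)).biUnion
        (fun A => Finset.univ.filter fun c => ∀ i ∈ S, c i ∈ A) := by
    intro c hc
    rw [Finset.mem_filter] at hc
    obtain ⟨A, hA1, hA2, hA3⟩ := Finset.exists_subsuperset_card_eq
      (Finset.subset_univ (S.image c)) hc.2 (by rwa [Finset.card_univ])
    rw [Finset.mem_biUnion]
    exact ⟨A, Finset.mem_powersetCard.mpr ⟨hA2, hA3⟩,
      Finset.mem_filter.mpr ⟨Finset.mem_univ _,
        fun i hi => hA1 (Finset.mem_image_of_mem _ hi)⟩⟩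
  have h2 : ((Finset.powersetCard j (Finset.univ : Finset κ)).biUnion
        (fun A => Finset.univ.filter fun c : ι → κ => ∀ i ∈ S, c i ∈ A)).card
      ≤ ∑ A ∈ Finset.powersetCard j (Finset.univ : Finset κ),
          (Finset.univ.filter fun c : ι → κ => ∀ i ∈ S, c i ∈ A).card :=
    Finset.card_biUnion_le
  have h1 : (Finset.univ.filter fun c : ι → κ => (S.image c).card ≤ j).card
      ≤ ((Finset.powersetCard j (Finset.univ : Finset κ)).biUnion
        (fun A => Finset.univ.filter fun c : ι → κ => ∀ i ∈ S, c i ∈ A)).card :=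
    Finset.card_le_card hsub
  have h3 : ∀ A ∈ Finset.powersetCard j (Finset.univ : Finset κ),
      (Finset.univ.filter fun c : ι → κ => ∀ i ∈ S, c i ∈ A).card
        = j ^ S.card * Fintype.card κ ^ (Fintype.card ι - S.card) := by
    intro A hA
    rw [card_filter_forall_mem S A, (Finset.mem_powersetCard.mp hA).2]
  have h4 : ∑ A ∈ Finset.powersetCard j (Finset.univ : Finset κ),
        (Finset.univ.filter fun c : ι → κ => ∀ i ∈ S, c i ∈ A).card
      = (Fintype.card κ).choose j * (j ^ S.card * Fintype.card κ ^ (Fintype.card ι - S.card)) := by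
    rw [Finset.sum_congr rfl h3, Finset.sum_const, Finset.card_powersetCard, Finset.card_univ,
      smul_eq_mul]
  exact h1.trans (h2.trans h4.le)


set_option maxHeartbeats 1000000 in
lemma main_bound {n k r : ℕ} (hk2 : 2 ≤ k) (hkn : k ≤ n) (hr : k - 1 ≤ r) :
    1 - ((r.choose (k - 2) * (k - 2) ^ (n - 1) : ℕ) : ℚ) / ((r ^ (n - 1) : ℕ) : ℚ)
      ≤ Pr n r (fun c => ∃ S : Finset (Fin n), ∃ T,
          S.card = k ∧ IsTreeOn S T ∧ Heterochromatic c T) := by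
  have hn1 : 1 ≤ n := le_trans (by omega) hkn
  have hr1 : 1 ≤ r := le_trans (by omega) hr
  set v0 : Fin n := ⟨0, by omega⟩ with hv0
  set leaves : Finset (Fin n) := Finset.univ.erase v0 with hleavesdef
  have hleaves : leaves.card = n - 1 := by
    rw [hleavesdef, Finset.card_erase_of_mem (Finset.mem_univ _), Finset.card_univ,
      Fintype.card_fin]
  have hv0leaves : v0 ∉ leaves := Finset.notMem_erase _ _
  set E0 : Finset (Sym2 (Fin n)) := leaves.image (fun i => s(v0, i)) with hE0def
  have edgeinj : Set.InjOn (fun i => s(v0, i)) ↑leaves := by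
    intro i hi j hj hij
    simp only [Sym2.eq_iff] at hij
    rcases hij with ⟨-, h⟩ | ⟨h1, -⟩
    · exact h
    · exact absurd hj (h1 ▸ hv0leaves)
  have hE0card : E0.card = n - 1 := by
    rw [hE0def, Finset.card_image_of_injOn edgeinj, hleaves]
  have hmn : n - 1 ≤ Fintype.card (Sym2 (Fin n)) := by
    rw [← hE0card]
    simpa using Finset.card_le_univ E0
  have hN : Fintype.card (Sym2 (Fin n) → Fin r) = r ^ Fintype.card (Sym2 (Fin n)) := by
    rw [Fintype.card_fun, Fintype.card_fin]
  set P : (Sym2 (Fin n) → Fin r) → Prop :=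
    fun c => ∃ S : Finset (Fin n), ∃ T, S.card = k ∧ IsTreeOn S T ∧ Heterochromatic c T with hP
  set Bad : Finset (Sym2 (Fin n) → Fin r) :=
    Finset.univ.filter (fun c => (E0.image c).card ≤ k - 2) with hBaddef
  have hEimg : ∀ c : Sym2 (Fin n) → Fin r,
      E0.image c = leaves.image (fun i => c s(v0, i)) := by
    intro c
    rw [hE0def, Finset.image_image]
    rfl
  have good : ∀ c, c ∉ Bad → P c := by
    intro c hc
    have himg : k - 1 ≤ (leaves.image fun i => c s(v0, i)).card := by
      rw [← hEimg c]
      by_contra hlt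
      exact hc (Finset.mem_filter.mpr ⟨Finset.mem_univ _, by omega⟩)
    obtain ⟨u, hu, hucard, huinj⟩ := exists_transversal (fun i => c s(v0, i)) leaves
    rw [← hucard] at himg
    obtain ⟨L, hLu, hLcard⟩ := Finset.exists_subset_card_eq himg
    have hLleaves : L ⊆ leaves := hLu.trans hu
    exact star_tree hk2 c v0 L (fun hmem => hv0leaves (hLleaves hmem)) hLcard
      (huinj.mono (Finset.coe_subset.mpr hLu))
  have hBadcard : Bad.card
      ≤ r.choose (k - 2) * ((k - 2) ^ (n - 1) * r ^ (Fintype.card (Sym2 (Fin n)) - (n - 1))) := by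
    have h1 := card_bad_le_s19 (κ := Fin r) E0 (k - 2)
      (by rw [Fintype.card_fin]; omega)
    rw [Fintype.card_fin, hE0card] at h1
    exact h1
  have hNsplit : r ^ Fintype.card (Sym2 (Fin n))
      = r ^ (n - 1) * r ^ (Fintype.card (Sym2 (Fin n)) - (n - 1)) := by
    rw [← pow_add]
    congr 1
    omega
  have hcompl : Finset.univ.filter (fun c => ¬ P c) ⊆ Bad := by
    intro c hc
    rw [Finset.mem_filter] at hc
    by_contra hb
    exact hc.2 (good c hb)
  have hcount : r ^ Fintype.card (Sym2 (Fin n)) ≤ (Finset.univ.filter P).card + Bad.card := by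
    have h1 := Finset.card_filter_add_card_filter_not
      (s := (Finset.univ : Finset (Sym2 (Fin n) → Fin r))) (p := P)
    rw [Finset.card_univ, hN] at h1
    have h2 := Finset.card_le_card hcompl
    omega
  have hNpos : (0 : ℚ) < ((r ^ Fintype.card (Sym2 (Fin n)) : ℕ) : ℚ) := by
    exact_mod_cast pow_pos (show 0 < r by omega) _
  have hRpos : (0 : ℚ) < ((r ^ (n - 1) : ℕ) : ℚ) := by
    exact_mod_cast pow_pos (show 0 < r by omega) (n - 1)
  have e1 : 1 - (Bad.card : ℚ) / ((r ^ Fintype.card (Sym2 (Fin n)) : ℕ) : ℚ)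
      ≤ ((Finset.univ.filter P).card : ℚ) / ((r ^ Fintype.card (Sym2 (Fin n)) : ℕ) : ℚ) := by
    rw [sub_le_iff_le_add, ← add_div, le_div_iff₀ hNpos, one_mul]
    exact_mod_cast hcount
  have e2 : (Bad.card : ℚ) / ((r ^ Fintype.card (Sym2 (Fin n)) : ℕ) : ℚ)
      ≤ ((r.choose (k - 2) * (k - 2) ^ (n - 1) : ℕ) : ℚ) / ((r ^ (n - 1) : ℕ) : ℚ) := by
    have hX : ((r ^ Fintype.card (Sym2 (Fin n)) : ℕ) : ℚ)
        = ((r ^ (n - 1) : ℕ) : ℚ) * ((r ^ (Fintype.card (Sym2 (Fin n)) - (n - 1)) : ℕ) : ℚ) := by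
      exact_mod_cast congrArg (Nat.cast : ℕ → ℚ) hNsplit
    have hb : (Bad.card : ℚ)
        ≤ ((r.choose (k - 2) * ((k - 2) ^ (n - 1)
            * r ^ (Fintype.card (Sym2 (Fin n)) - (n - 1))) : ℕ) : ℚ) := by
      exact_mod_cast hBadcard
    rw [hX, div_le_div_iff₀ (by positivity) hRpos]
    calc (Bad.card : ℚ) * ((r ^ (n - 1) : ℕ) : ℚ)
        ≤ ((r.choose (k - 2) * ((k - 2) ^ (n - 1)
            * r ^ (Fintype.card (Sym2 (Fin n)) - (n - 1))) : ℕ) : ℚ)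
            * ((r ^ (n - 1) : ℕ) : ℚ) := mul_le_mul_of_nonneg_right hb hRpos.le
      _ = ((r.choose (k - 2) * (k - 2) ^ (n - 1) : ℕ) : ℚ)
            * (((r ^ (n - 1) : ℕ) : ℚ)
              * ((r ^ (Fintype.card (Sym2 (Fin n)) - (n - 1)) : ℕ) : ℚ)) := by
        push_cast
        ring
  have final : 1 - ((r.choose (k - 2) * (k - 2) ^ (n - 1) : ℕ) : ℚ) / ((r ^ (n - 1) : ℕ) : ℚ)
      ≤ ((Finset.univ.filter P).card : ℚ) / ((r ^ Fintype.card (Sym2 (Fin n)) : ℕ) : ℚ) := by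
    linarith
  unfold Pr
  rw [hN]
  rw [Finset.filter_congr_decidable]
  exact final

lemma q_le_h {n k r : ℕ} (hk2 : 2 ≤ k) (hkn : k ≤ n) (hr : k - 1 ≤ r)
    (hklog : (k : ℝ) ≤ Real.log n) (hn3 : 3 ≤ n) :
    ((((r.choose (k - 2) * (k - 2) ^ (n - 1) : ℕ) : ℚ) / ((r ^ (n - 1) : ℕ) : ℚ) : ℚ) : ℝ)
      ≤ Real.exp (Real.log n * Real.log (Real.log n) - ((n : ℝ) - 1) / Real.log n) := by
  have hr1 : 1 ≤ r := by omega
  have hcast : ((((r.choose (k - 2) * (k - 2) ^ (n - 1) : ℕ) : ℚ) / ((r ^ (n - 1) : ℕ) : ℚ) : ℚ) : ℝ)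
      = (((r.choose (k - 2) : ℕ) : ℝ) * (((k - 2 : ℕ) : ℝ)) ^ (n - 1)) / ((r : ℝ)) ^ (n - 1) := by
    push_cast
    ring
  rw [hcast]
  rcases eq_or_lt_of_le hk2 with hk2' | hk3
  · -- k = 2
    have : ((k - 2 : ℕ) : ℝ) = 0 := by
      rw [← hk2']
      norm_num
    rw [this, zero_pow (by omega : n - 1 ≠ 0)]
    simp [(Real.exp_pos _).le]
  · have hk3 : 3 ≤ k := hk3
    have hrk : k - 1 ≤ r := hr
    have hlogpos : (0 : ℝ) < Real.log n := by
      have : (3 : ℝ) ≤ (k : ℝ) := by exact_mod_cast hk3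
      linarith
    have hlog1 : (1 : ℝ) ≤ Real.log n := by
      have : (3 : ℝ) ≤ (k : ℝ) := by exact_mod_cast hk3
      linarith
    -- abbreviations
    have hapos : (0 : ℝ) < ((k - 1 : ℕ) : ℝ) := by
      have : 0 < k - 1 := by omega
      exact_mod_cast this
    have ha1 : (1 : ℝ) ≤ ((k - 1 : ℕ) : ℝ) := by
      have : 1 ≤ k - 1 := by omega
      exact_mod_cast this
    have hbnonneg : (0 : ℝ) ≤ ((k - 2 : ℕ) : ℝ) := Nat.cast_nonneg _
    have hrpos : (0 : ℝ) < (r : ℝ) := by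
      exact_mod_cast (by omega : 0 < r)
    -- Step 1 : nat inequality
    have hnat : r.choose (k - 2) * (k - 1) ^ (n - 1) ≤ (k - 1) ^ (k - 2) * r ^ (n - 1) := by
      have hsplit : n - 1 = (k - 2) + (n - k + 1) := by omega
      calc r.choose (k - 2) * (k - 1) ^ (n - 1)
          ≤ r ^ (k - 2) * (k - 1) ^ (n - 1) :=
            Nat.mul_le_mul_right _ (Nat.choose_le_pow r (k - 2))
        _ = r ^ (k - 2) * ((k - 1) ^ (k - 2) * (k - 1) ^ (n - k + 1)) := by
            rw [hsplit, pow_add]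
        _ ≤ r ^ (k - 2) * ((k - 1) ^ (k - 2) * r ^ (n - k + 1)) := by
            gcongr
        _ = (k - 1) ^ (k - 2) * r ^ (n - 1) := by
            rw [hsplit, pow_add]
            ring
    have hnatR : ((r.choose (k - 2) : ℕ) : ℝ) * ((k - 1 : ℕ) : ℝ) ^ (n - 1)
        ≤ ((k - 1 : ℕ) : ℝ) ^ (k - 2) * (r : ℝ) ^ (n - 1) := by
      exact_mod_cast hnat
    -- Step 2 : real fraction bound
    have hfrac : (((r.choose (k - 2) : ℕ) : ℝ) * (((k - 2 : ℕ) : ℝ)) ^ (n - 1)) / ((r : ℝ)) ^ (n - 1)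
        ≤ ((k - 1 : ℕ) : ℝ) ^ (k - 2) * (((k - 2 : ℕ) : ℝ) / ((k - 1 : ℕ) : ℝ)) ^ (n - 1) := by
      rw [div_pow, mul_div_assoc', div_le_div_iff₀ (by positivity) (by positivity)]
      calc ((r.choose (k - 2) : ℕ) : ℝ) * ((k - 2 : ℕ) : ℝ) ^ (n - 1) * ((k - 1 : ℕ) : ℝ) ^ (n - 1)
          = (((r.choose (k - 2) : ℕ) : ℝ) * ((k - 1 : ℕ) : ℝ) ^ (n - 1))
              * ((k - 2 : ℕ) : ℝ) ^ (n - 1) := by ring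
        _ ≤ (((k - 1 : ℕ) : ℝ) ^ (k - 2) * (r : ℝ) ^ (n - 1)) * ((k - 2 : ℕ) : ℝ) ^ (n - 1) :=
            mul_le_mul_of_nonneg_right hnatR (by positivity)
        _ = ((k - 1 : ℕ) : ℝ) ^ (k - 2) * ((k - 2 : ℕ) : ℝ) ^ (n - 1) * (r : ℝ) ^ (n - 1) := by
            ring
    refine hfrac.trans ?_
    -- Step 3
    have hexp1 : ((k - 1 : ℕ) : ℝ) ^ (k - 2) ≤ Real.exp (Real.log n * Real.log (Real.log n)) := by
      rw [← Real.rpow_natCast (((k - 1 : ℕ) : ℝ)) (k - 2), Real.rpow_def_of_pos hapos,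
        Real.exp_le_exp]
      have hkle : ((k - 1 : ℕ) : ℝ) ≤ Real.log n := by
        have h1 : ((k - 1 : ℕ) : ℝ) ≤ (k : ℝ) := by exact_mod_cast Nat.sub_le k 1
        linarith
      have hb2 : ((k - 2 : ℕ) : ℝ) ≤ Real.log n := by
        have h1 : ((k - 2 : ℕ) : ℝ) ≤ (k : ℝ) := by exact_mod_cast Nat.sub_le k 2
        linarith
      have hla : Real.log ((k - 1 : ℕ) : ℝ) ≤ Real.log (Real.log n) :=
        Real.log_le_log hapos hkle
      have hlanonneg : 0 ≤ Real.log ((k - 1 : ℕ) : ℝ) := Real.log_nonneg ha1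
      calc Real.log ((k - 1 : ℕ) : ℝ) * ((k - 2 : ℕ) : ℝ)
          ≤ Real.log (Real.log n) * Real.log n :=
            mul_le_mul hla hb2 hbnonneg (Real.log_nonneg hlog1)
        _ = Real.log n * Real.log (Real.log n) := mul_comm _ _
    -- Step 4
    have hexp2 : (((k - 2 : ℕ) : ℝ) / ((k - 1 : ℕ) : ℝ)) ^ (n - 1)
        ≤ Real.exp (-(((n : ℝ) - 1) / Real.log n)) := by
      have hkle : ((k - 1 : ℕ) : ℝ) ≤ Real.log n := by
        have h1 : ((k - 1 : ℕ) : ℝ) ≤ (k : ℝ) := by exact_mod_cast Nat.sub_le k 1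
        linarith
      have e1 : ((k - 2 : ℕ) : ℝ) / ((k - 1 : ℕ) : ℝ) = 1 - 1 / ((k - 1 : ℕ) : ℝ) := by
        have hne : ((k : ℝ) - 1) ≠ 0 := by
          have h3 : (3 : ℝ) ≤ (k : ℝ) := by exact_mod_cast hk3
          linarith
        rw [Nat.cast_sub (by omega : 2 ≤ k), Nat.cast_sub (by omega : 1 ≤ k)]
        push_cast
        field_simp
        ring
      have e2 : 1 / Real.log n ≤ 1 / ((k - 1 : ℕ) : ℝ) :=
        one_div_le_one_div_of_le hapos hkle
      have e3 : 1 - 1 / Real.log n ≤ Real.exp (-(1 / Real.log n)) := by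
        have := Real.add_one_le_exp (-(1 / Real.log n))
        linarith
      have h1 : ((k - 2 : ℕ) : ℝ) / ((k - 1 : ℕ) : ℝ) ≤ Real.exp (-(1 / Real.log n)) := by
        rw [e1]
        linarith
      calc (((k - 2 : ℕ) : ℝ) / ((k - 1 : ℕ) : ℝ)) ^ (n - 1)
          ≤ (Real.exp (-(1 / Real.log n))) ^ (n - 1) :=
            pow_le_pow_left₀ (by positivity) h1 _
        _ = Real.exp (-(((n : ℝ) - 1) / Real.log n)) := by
            rw [← Real.exp_nat_mul]
            congr 1
            rw [Nat.cast_sub (by omega : 1 ≤ n), Nat.cast_one]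
            field_simp
    calc ((k - 1 : ℕ) : ℝ) ^ (k - 2) * (((k - 2 : ℕ) : ℝ) / ((k - 1 : ℕ) : ℝ)) ^ (n - 1)
        ≤ Real.exp (Real.log n * Real.log (Real.log n))
            * Real.exp (-(((n : ℝ) - 1) / Real.log n)) := by
          apply mul_le_mul hexp1 hexp2 (by positivity) (Real.exp_pos _).le
      _ = Real.exp (Real.log n * Real.log (Real.log n) - ((n : ℝ) - 1) / Real.log n) := by
          rw [← Real.exp_add]
          ring_nf


lemma tail_tendsto :
    Tendsto (fun n : ℕ =>
        Real.exp (Real.log n * Real.log (Real.log n) - ((n : ℝ) - 1) / Real.log n))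
      atTop (nhds 0) := by
  have hrp : Tendsto (fun n : ℕ => ((n : ℝ)) ^ ((3 : ℝ) / 4)) atTop atTop :=
    (tendsto_rpow_atTop (by norm_num)).comp tendsto_natCast_atTop_atTop
  have hrq : Tendsto (fun n : ℕ => ((n : ℝ)) ^ ((1 : ℝ) / 4)) atTop atTop :=
    (tendsto_rpow_atTop (by norm_num)).comp tendsto_natCast_atTop_atTop
  have hg : Tendsto (fun n : ℕ => -(((n : ℝ)) ^ ((3 : ℝ) / 4) / 16)) atTop atBot := by
    apply tendsto_neg_atTop_atBot.comp
    exact hrp.atTop_div_const (by norm_num)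
  have hu : Tendsto (fun n : ℕ =>
      Real.log n * Real.log (Real.log n) - ((n : ℝ) - 1) / Real.log n) atTop atBot := by
    apply tendsto_atBot_mono' atTop ?_ hg
    filter_upwards [hrq.eventually_ge_atTop 256, eventually_ge_atTop 3] with n h256 h3
    have hx3 : (3 : ℝ) ≤ (n : ℝ) := by exact_mod_cast h3
    have hx0 : (0 : ℝ) < (n : ℝ) := by linarith
    have hlog1 : (1 : ℝ) ≤ Real.log n := by
      rw [Real.le_log_iff_exp_le hx0]
      calc Real.exp 1 ≤ 2.7182818286 := Real.exp_one_lt_d9.le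
        _ ≤ (n : ℝ) := by linarith
    have hq0 : (0 : ℝ) < ((n : ℝ)) ^ ((1 : ℝ) / 4) := Real.rpow_pos_of_pos hx0 _
    have hlogx : Real.log n ≤ 4 * ((n : ℝ)) ^ ((1 : ℝ) / 4) := by
      have h1 : Real.log (((n : ℝ)) ^ ((1 : ℝ) / 4)) = (1 / 4) * Real.log n :=
        Real.log_rpow hx0 _
      have h2 : Real.log (((n : ℝ)) ^ ((1 : ℝ) / 4)) ≤ ((n : ℝ)) ^ ((1 : ℝ) / 4) := by
        have := Real.log_le_sub_one_of_pos hq0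
        linarith
      linarith
    have hloglog : Real.log (Real.log n) ≤ Real.log n := by
      apply Real.log_le_log (by linarith)
      have := Real.log_le_sub_one_of_pos hx0
      linarith
    have hloglognn : 0 ≤ Real.log (Real.log n) := Real.log_nonneg hlog1
    have hhalf : ((n : ℝ)) ^ ((1 : ℝ) / 4) * ((n : ℝ)) ^ ((1 : ℝ) / 4)
        = ((n : ℝ)) ^ ((1 : ℝ) / 2) := by
      rw [← Real.rpow_add hx0]
      norm_num
    have hterm1 : Real.log n * Real.log (Real.log n) ≤ 16 * ((n : ℝ)) ^ ((1 : ℝ) / 2) := by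
      calc Real.log n * Real.log (Real.log n)
          ≤ (4 * ((n : ℝ)) ^ ((1 : ℝ) / 4)) * (4 * ((n : ℝ)) ^ ((1 : ℝ) / 4)) := by
            apply mul_le_mul hlogx (hloglog.trans hlogx) hloglognn (by positivity)
        _ = 16 * ((n : ℝ)) ^ ((1 : ℝ) / 2) := by
            rw [← hhalf]
            ring
    have hxx : ((n : ℝ)) ^ ((1 : ℝ) / 4) * ((n : ℝ)) ^ ((3 : ℝ) / 4) = (n : ℝ) := by
      rw [← Real.rpow_add hx0]
      norm_num
    have hterm2 : ((n : ℝ)) ^ ((3 : ℝ) / 4) / 8 ≤ ((n : ℝ) - 1) / Real.log n := by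
      have hstep1 : ((n : ℝ) - 1) / (4 * ((n : ℝ)) ^ ((1 : ℝ) / 4)) ≤ ((n : ℝ) - 1) / Real.log n := by
        apply div_le_div_of_nonneg_left (by linarith) (by linarith) hlogx
      refine le_trans ?_ hstep1
      rw [div_le_div_iff₀ (by norm_num) (by positivity)]
      calc ((n : ℝ)) ^ ((3 : ℝ) / 4) * (4 * ((n : ℝ)) ^ ((1 : ℝ) / 4))
          = 4 * (((n : ℝ)) ^ ((1 : ℝ) / 4) * ((n : ℝ)) ^ ((3 : ℝ) / 4)) := by ring
        _ = 4 * (n : ℝ) := by rw [hxx]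
        _ ≤ ((n : ℝ) - 1) * 8 := by linarith
    have hterm3 : 16 * ((n : ℝ)) ^ ((1 : ℝ) / 2) ≤ ((n : ℝ)) ^ ((3 : ℝ) / 4) / 16 := by
      have h1 : ((n : ℝ)) ^ ((1 : ℝ) / 2) * ((n : ℝ)) ^ ((1 : ℝ) / 4) = ((n : ℝ)) ^ ((3 : ℝ) / 4) := by
        rw [← Real.rpow_add hx0]
        norm_num
      have h2 : ((n : ℝ)) ^ ((1 : ℝ) / 2) * 256 ≤ ((n : ℝ)) ^ ((1 : ℝ) / 2) * ((n : ℝ)) ^ ((1 : ℝ) / 4) :=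
        mul_le_mul_of_nonneg_left h256 (by positivity)
      rw [h1] at h2
      linarith
    linarith
  exact Real.tendsto_exp_atBot.comp hu

/-- if `2 ≤ k(n) ≤ log n` and `r(n) ≥ k(n) - 1`, then the
probability that a heterochromatic `k(n)`-tree exists tends to `1`. -/
theorem hetero_tree_exists (k r : ℕ → ℕ)
    (h : ∀ᶠ n in atTop,
      2 ≤ k n ∧ (k n : ℝ) ≤ Real.log n ∧ k n - 1 ≤ r n) :
    Tendsto
      (fun n =>
        ((Pr n (r n)
            (fun c => ∃ S : Finset (Fin n), ∃ T,
              S.card = k n ∧ IsTreeOn S T ∧ Heterochromatic c T) : ℚ) : ℝ))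
      atTop (nhds 1) := by
  have hup : ∀ n : ℕ, ((Pr n (r n) (fun c => ∃ S : Finset (Fin n), ∃ T,
      S.card = k n ∧ IsTreeOn S T ∧ Heterochromatic c T) : ℚ) : ℝ) ≤ 1 := by
    intro n
    have h1 : (Pr n (r n) (fun c => ∃ S : Finset (Fin n), ∃ T,
        S.card = k n ∧ IsTreeOn S T ∧ Heterochromatic c T) : ℚ) ≤ 1 := by
      unfold Pr
      rw [Finset.filter_congr_decidable]
      apply div_le_one_of_le₀
      · exact_mod_cast (Finset.card_filter_le _ _).trans_eq Finset.card_univ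
      · positivity
    exact_mod_cast h1
  apply tendsto_of_tendsto_of_tendsto_of_le_of_le'
    (g := fun n : ℕ =>
      1 - Real.exp (Real.log n * Real.log (Real.log n) - ((n : ℝ) - 1) / Real.log n))
    (h := fun _ : ℕ => (1 : ℝ))
  · simpa using tendsto_const_nhds.sub tail_tendsto
  · exact tendsto_const_nhds
  · filter_upwards [h, eventually_ge_atTop 3] with n hn hn3
    obtain ⟨hk2, hklog, hkr⟩ := hn
    have hn0 : (0 : ℝ) < (n : ℝ) := by
      have h3 : (3 : ℝ) ≤ (n : ℝ) := by exact_mod_cast hn3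
      linarith
    have hkn : k n ≤ n := by
      have h1 : Real.log n ≤ (n : ℝ) := by
        have := Real.log_le_sub_one_of_pos hn0
        linarith
      have h2 : (k n : ℝ) ≤ (n : ℝ) := hklog.trans h1
      exact_mod_cast h2
    have hq := main_bound (n := n) (k := k n) (r := r n) hk2 hkn hkr
    have hq' := (Rat.cast_le (K := ℝ)).mpr hq
    rw [Rat.cast_sub, Rat.cast_one] at hq'
    have hqh := q_le_h (n := n) (k := k n) (r := r n) hk2 hkn hkr hklog hn3
    linarith [hqh, hq']
  · exact Eventually.of_forall hup

end
end
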